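/- Under the stated hypotheses, the demodulated averaged gradients satisfy the first-order expansions (1/Π)·∫₀^Π ∇v(r(a) + p_a(σ))·sin(ω₁σ) dσ = (a₁/2)·H·e₁ + o(‖a‖) and (1/Π)·∫₀^Π ∇v(r(a) + p_a(σ))·sin(ω₂σ) dσ = (a₂/2)·H·e₂ + o(‖a‖) as a → 0, where e₁ = (1,0) and e₂ = (0,1); that is, the difference between each left-hand side and the corresponding linear term, divided by ‖a‖, tends to 0 as a → 0. -/

import Mathlib

open Filter Topology

open Real intervalIntegral Asymptotics

lemma sin_k2pi (k : ℤ) : Real.sin (k * (2 * π)) = 0 := by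
  have : (k : ℝ) * (2 * π) = (2 * k : ℤ) * π := by push_cast; ring
  rw [this, Real.sin_int_mul_pi]

lemma myint_cos (c T : ℝ) (hc : c ≠ 0) (k : ℤ) (h : c * T = k * (2 * π)) :
    ∫ σ in (0:ℝ)..T, Real.cos (c * σ) = 0 := by
  have hd : ∀ x ∈ Set.uIcc (0:ℝ) T, HasDerivAt (fun σ => Real.sin (c * σ) / c) (Real.cos (c * x)) x := by
    intro x _
    have h1 : HasDerivAt (fun σ : ℝ => c * σ) c x := by
      simpa using (hasDerivAt_id x).const_mul c
    have h2 := ((Real.hasDerivAt_sin (c * x)).comp x h1).div_const c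
    rw [mul_div_cancel_right₀ _ hc] at h2
    exact h2
  rw [intervalIntegral.integral_eq_sub_of_hasDerivAt hd
    (by apply Continuous.intervalIntegrable; continuity)]
  simp [h, sin_k2pi]

lemma myint_sin (c T : ℝ) (hc : c ≠ 0) (k : ℤ) (h : c * T = k * (2 * π)) :
    ∫ σ in (0:ℝ)..T, Real.sin (c * σ) = 0 := by
  have hd : ∀ x ∈ Set.uIcc (0:ℝ) T, HasDerivAt (fun σ => -Real.cos (c * σ) / c) (Real.sin (c * x)) x := by
    intro x _
    have h1 : HasDerivAt (fun σ : ℝ => c * σ) c x := by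
      simpa using (hasDerivAt_id x).const_mul c
    have h2 := (((Real.hasDerivAt_cos (c * x)).comp x h1).neg).div_const c
    simp only [neg_mul, neg_neg, mul_div_cancel_right₀ _ hc] at h2
    exact h2
  rw [intervalIntegral.integral_eq_sub_of_hasDerivAt hd
    (by apply Continuous.intervalIntegrable; continuity)]
  simp [h, Real.cos_int_mul_two_pi]

lemma myint_sinsq (c T : ℝ) (hc : c ≠ 0) (k : ℤ) (h : c * T = k * (2 * π)) :
    ∫ σ in (0:ℝ)..T, Real.sin (c * σ) * Real.sin (c * σ) = T / 2 := by
  have key : ∀ σ : ℝ, Real.sin (c * σ) * Real.sin (c * σ)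
      = 1 / 2 - Real.cos (2 * c * σ) / 2 := by
    intro σ
    have h1 := Real.cos_sq (c * σ)
    have h2 := Real.sin_sq_add_cos_sq (c * σ)
    rw [mul_assoc]
    nlinarith [h1, h2]
  have hi : (∫ σ in (0:ℝ)..T, Real.sin (c * σ) * Real.sin (c * σ))
      = ∫ σ in (0:ℝ)..T, (1 / 2 - Real.cos (2 * c * σ) / 2) := by
    exact intervalIntegral.integral_congr (fun σ _ => key σ)
  rw [hi, intervalIntegral.integral_sub (by apply Continuous.intervalIntegrable; continuity)
    (by apply Continuous.intervalIntegrable; continuity)]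
  have h3 : ∫ σ in (0:ℝ)..T, Real.cos (2 * c * σ) = 0 :=
    myint_cos (2 * c) T (by simpa using hc) (2 * k) (by push_cast; linarith)
  have h4 : (∫ σ in (0:ℝ)..T, Real.cos (2 * c * σ) / 2)
      = (∫ σ in (0:ℝ)..T, Real.cos (2 * c * σ)) / 2 := intervalIntegral.integral_div ..
  rw [h4, h3]
  norm_num

lemma myint_sinsin (c d T : ℝ) (hcd : c ≠ d) (hc : 0 < c) (hd : 0 < d)
    (j k : ℤ) (hj : c * T = j * (2 * π)) (hk : d * T = k * (2 * π)) :
    ∫ σ in (0:ℝ)..T, Real.sin (c * σ) * Real.sin (d * σ) = 0 := by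
  have key : ∀ σ : ℝ, Real.sin (c * σ) * Real.sin (d * σ)
      = Real.cos ((c - d) * σ) / 2 - Real.cos ((c + d) * σ) / 2 := by
    intro σ
    have h1 := Real.cos_sub (c * σ) (d * σ)
    have h2 := Real.cos_add (c * σ) (d * σ)
    have e1 : (c - d) * σ = c * σ - d * σ := by ring
    have e2 : (c + d) * σ = c * σ + d * σ := by ring
    rw [e1, e2, h1, h2]; ring
  rw [intervalIntegral.integral_congr (fun σ _ => key σ),
    intervalIntegral.integral_sub (by apply Continuous.intervalIntegrable; continuity)
    (by apply Continuous.intervalIntegrable; continuity),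
    intervalIntegral.integral_div, intervalIntegral.integral_div,
    myint_cos (c - d) T (sub_ne_zero.mpr hcd) (j - k) (by push_cast; linarith),
    myint_cos (c + d) T (by positivity) (j + k) (by push_cast; linarith)]
  simp


lemma Kcalc (T ω ω₁ ω₂ I1 I2 : ℝ) (c a : ℝ × ℝ)
    (hs : ∫ σ in (0:ℝ)..T, Real.sin (ω * σ) = 0)
    (h1 : ∫ σ in (0:ℝ)..T, Real.sin (ω * σ) * Real.sin (ω₁ * σ) = I1)
    (h2 : ∫ σ in (0:ℝ)..T, Real.sin (ω * σ) * Real.sin (ω₂ * σ) = I2) :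
    (∫ σ in (0:ℝ)..T, Real.sin (ω * σ) •
        (c + (a.1 * Real.sin (ω₁ * σ), a.2 * Real.sin (ω₂ * σ)) : ℝ × ℝ))
      = (a.1 * I1, a.2 * I2) := by
  have key : ∀ σ : ℝ, Real.sin (ω * σ) •
      (c + (a.1 * Real.sin (ω₁ * σ), a.2 * Real.sin (ω₂ * σ)) : ℝ × ℝ)
      = Real.sin (ω * σ) • c
        + ((a.1 * (Real.sin (ω * σ) * Real.sin (ω₁ * σ))) • ((1, 0) : ℝ × ℝ)
            + (a.2 * (Real.sin (ω * σ) * Real.sin (ω₂ * σ))) • ((0, 1) : ℝ × ℝ)) := by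
    intro σ
    apply Prod.ext <;>
      simp [Prod.smul_mk, Prod.fst_add, Prod.snd_add, smul_eq_mul] <;> ring
  rw [intervalIntegral.integral_congr (fun σ _ => key σ)]
  have c1 : Continuous fun σ : ℝ => Real.sin (ω * σ) :=
    Real.continuous_sin.comp (continuous_const.mul continuous_id)
  have c2 : Continuous fun σ : ℝ => Real.sin (ω₁ * σ) :=
    Real.continuous_sin.comp (continuous_const.mul continuous_id)
  have c3 : Continuous fun σ : ℝ => Real.sin (ω₂ * σ) :=
    Real.continuous_sin.comp (continuous_const.mul continuous_id)
  rw [intervalIntegral.integral_add (f := fun σ => Real.sin (ω * σ) • c) (g := fun σ => (a.1 * (Real.sin (ω * σ) * Real.sin (ω₁ * σ))) • ((1, 0) : ℝ × ℝ) + (a.2 * (Real.sin (ω * σ) * Real.sin (ω₂ * σ))) • ((0, 1) : ℝ × ℝ))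
      ((c1.smul continuous_const).intervalIntegrable _ _)
      (((((continuous_const.mul (c1.mul c2))).smul continuous_const).add
        (((continuous_const.mul (c1.mul c3))).smul continuous_const)).intervalIntegrable _ _),
    intervalIntegral.integral_add (f := fun σ => (a.1 * (Real.sin (ω * σ) * Real.sin (ω₁ * σ))) • ((1, 0) : ℝ × ℝ)) (g := fun σ => (a.2 * (Real.sin (ω * σ) * Real.sin (ω₂ * σ))) • ((0, 1) : ℝ × ℝ))
      (((continuous_const.mul (c1.mul c2)).smul continuous_const).intervalIntegrable _ _)
      (((continuous_const.mul (c1.mul c3)).smul continuous_const).intervalIntegrable _ _),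
    intervalIntegral.integral_smul_const, intervalIntegral.integral_smul_const,
    intervalIntegral.integral_smul_const, hs,
    intervalIntegral.integral_const_mul, intervalIntegral.integral_const_mul, h1, h2]
  apply Prod.ext <;> simp [Prod.smul_mk, smul_eq_mul]


lemma aux_tendsto (G : ℝ × ℝ → ℝ × ℝ) (hGc : Continuous G)
    (A : (ℝ × ℝ) →L[ℝ] (ℝ × ℝ)) (hGA : HasFDerivAt G A 0) (hG0 : G 0 = 0)
    (r : ℝ × ℝ → ℝ × ℝ) (hrO : (fun a => r a) =o[𝓝 (0 : ℝ × ℝ)] (fun a => a))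
    (T ω ω₁ ω₂ : ℝ) (hT : 0 < T)
    (w M : ℝ × ℝ → ℝ × ℝ) (hw : ∀ a, ‖w a‖ ≤ ‖a‖)
    (hM : ∀ a, M a = ((1 : ℝ) / 2) • A (w a))
    (hK : ∀ a : ℝ × ℝ, (∫ σ in (0:ℝ)..T, Real.sin (ω * σ) •
        (r a + (a.1 * Real.sin (ω₁ * σ), a.2 * Real.sin (ω₂ * σ)) : ℝ × ℝ))
        = (T / 2) • w a) :
    Tendsto (fun a : ℝ × ℝ =>
      ‖(1 / T) • (∫ σ in (0:ℝ)..T, Real.sin (ω * σ) •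
          G (r a + (a.1 * Real.sin (ω₁ * σ), a.2 * Real.sin (ω₂ * σ))))
        - M a‖ / ‖a‖) (𝓝[≠] (0 : ℝ × ℝ)) (𝓝 0) := by
  set ρ : ℝ × ℝ → ℝ × ℝ := fun x => G x - A x with hρ
  have hρc : Continuous ρ := hGc.sub A.continuous
  have hρo : ρ =o[𝓝 (0 : ℝ × ℝ)] (fun x => x) := by
    have := hGA.isLittleO
    simpa [hρ, hG0] using this
  set q : ℝ × ℝ → ℝ → ℝ × ℝ :=
    fun a σ => r a + (a.1 * Real.sin (ω₁ * σ), a.2 * Real.sin (ω₂ * σ)) with hq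
  have hqc : ∀ a, Continuous (fun σ => q a σ) := by
    intro a
    apply continuous_const.add
    exact (continuous_const.mul (Real.continuous_sin.comp (continuous_const.mul continuous_id))).prodMk
      (continuous_const.mul (Real.continuous_sin.comp (continuous_const.mul continuous_id)))
  have hsinc : Continuous (fun σ : ℝ => Real.sin (ω * σ)) :=
    Real.continuous_sin.comp (continuous_const.mul continuous_id)
  have hintA : ∀ a, IntervalIntegrable (fun σ => Real.sin (ω * σ) • A (q a σ))
      MeasureTheory.volume 0 T :=
    fun a => (hsinc.smul (A.continuous.comp (hqc a))).intervalIntegrable _ _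
  have hintρ : ∀ a, IntervalIntegrable (fun σ => Real.sin (ω * σ) • ρ (q a σ))
      MeasureTheory.volume 0 T :=
    fun a => (hsinc.smul (hρc.comp (hqc a))).intervalIntegrable _ _
  have hintq : ∀ a, IntervalIntegrable (fun σ => Real.sin (ω * σ) • q a σ)
      MeasureTheory.volume 0 T :=
    fun a => (hsinc.smul (hqc a)).intervalIntegrable _ _
  -- key algebraic identity
  have key : ∀ a : ℝ × ℝ,
      (1 / T) • (∫ σ in (0:ℝ)..T, Real.sin (ω * σ) • G (q a σ)) - M a
        = (1 / T) • (∫ σ in (0:ℝ)..T, Real.sin (ω * σ) • ρ (q a σ)) := by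
    intro a
    have h1 : (∫ σ in (0:ℝ)..T, Real.sin (ω * σ) • G (q a σ))
        = (∫ σ in (0:ℝ)..T, Real.sin (ω * σ) • A (q a σ))
          + (∫ σ in (0:ℝ)..T, Real.sin (ω * σ) • ρ (q a σ)) := by
      rw [← intervalIntegral.integral_add (hintA a) (hintρ a)]
      apply intervalIntegral.integral_congr
      intro σ _
      simp only [hρ, smul_sub]
      abel
    have h2 : (∫ σ in (0:ℝ)..T, Real.sin (ω * σ) • A (q a σ))
        = (T / 2) • A (w a) := by
      have : (∫ σ in (0:ℝ)..T, Real.sin (ω * σ) • A (q a σ))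
          = (∫ σ in (0:ℝ)..T, A (Real.sin (ω * σ) • q a σ)) := by
        apply intervalIntegral.integral_congr
        intro σ _
        exact (A.map_smul _ _).symm
      rw [this, A.intervalIntegral_comp_comm (hintq a), hK a, A.map_smul]
    rw [h1, h2, hM a, smul_add, smul_smul,
      show (1 / T) * (T / 2) = (1 / 2 : ℝ) by field_simp]
    abel
  show Tendsto (fun a => ‖(1 / T) • (∫ σ in (0:ℝ)..T, Real.sin (ω * σ) • G (q a σ)) - M a‖ / ‖a‖) _ _
  simp only [key]
  -- epsilon argument
  rw [Metric.tendsto_nhds]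
  intro ε hε
  have hε3 : (0 : ℝ) < ε / 3 := by linarith
  have hρ' := hρo.def hε3
  obtain ⟨η, hη, hball⟩ := Metric.eventually_nhds_iff.mp hρ'
  have h1 : ∀ᶠ a in 𝓝 (0 : ℝ × ℝ), ‖a‖ < η / 2 := by
    have := Metric.ball_mem_nhds (0 : ℝ × ℝ) (by positivity : (0:ℝ) < η / 2)
    filter_upwards [this] with a ha
    simpa [dist_zero_right] using ha
  have hr1 : ∀ᶠ a in 𝓝 (0 : ℝ × ℝ), ‖r a‖ ≤ 1 * ‖a‖ := hrO.def one_pos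
  filter_upwards [nhdsWithin_le_nhds h1, nhdsWithin_le_nhds hr1,
    self_mem_nhdsWithin] with a ha hra hane
  have hane' : a ≠ 0 := hane
  have hna : 0 < ‖a‖ := norm_pos_iff.mpr hane'
  -- pointwise bound on the integrand
  have hqb : ∀ σ : ℝ, ‖q a σ‖ ≤ 2 * ‖a‖ := by
    intro σ
    have hp : ‖((a.1 * Real.sin (ω₁ * σ), a.2 * Real.sin (ω₂ * σ)) : ℝ × ℝ)‖ ≤ ‖a‖ := by
      rw [Prod.norm_def]
      apply max_le
      · calc ‖a.1 * Real.sin (ω₁ * σ)‖ = ‖a.1‖ * ‖Real.sin (ω₁ * σ)‖ := by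
              simp [abs_mul]
          _ ≤ ‖a.1‖ * 1 := by
              apply mul_le_mul_of_nonneg_left _ (norm_nonneg _)
              simpa using Real.abs_sin_le_one (ω₁ * σ)
          _ = ‖a.1‖ := mul_one _
          _ ≤ ‖a‖ := norm_fst_le a
      · calc ‖a.2 * Real.sin (ω₂ * σ)‖ = ‖a.2‖ * ‖Real.sin (ω₂ * σ)‖ := by
              simp [abs_mul]
          _ ≤ ‖a.2‖ * 1 := by
              apply mul_le_mul_of_nonneg_left _ (norm_nonneg _)
              simpa using Real.abs_sin_le_one (ω₂ * σ)
          _ = ‖a.2‖ := mul_one _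
          _ ≤ ‖a‖ := norm_snd_le a
    calc ‖q a σ‖ ≤ ‖r a‖ + ‖((a.1 * Real.sin (ω₁ * σ), a.2 * Real.sin (ω₂ * σ)) : ℝ × ℝ)‖ :=
          norm_add_le _ _
      _ ≤ 1 * ‖a‖ + ‖a‖ := add_le_add hra hp
      _ = 2 * ‖a‖ := by ring
  have hbound : ∀ σ ∈ Set.uIoc (0:ℝ) T,
      ‖Real.sin (ω * σ) • ρ (q a σ)‖ ≤ ε / 3 * (2 * ‖a‖) := by
    intro σ _
    have hqη : dist (q a σ) 0 < η := by
      rw [dist_zero_right]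
      calc ‖q a σ‖ ≤ 2 * ‖a‖ := hqb σ
        _ < 2 * (η / 2) := by linarith [ha]
        _ = η := by ring
    have hρb : ‖ρ (q a σ)‖ ≤ ε / 3 * ‖q a σ‖ := hball hqη
    calc ‖Real.sin (ω * σ) • ρ (q a σ)‖ = ‖Real.sin (ω * σ)‖ * ‖ρ (q a σ)‖ := norm_smul _ _
      _ ≤ 1 * (ε / 3 * ‖q a σ‖) := by
          apply mul_le_mul _ hρb (norm_nonneg _) one_pos.le
          simpa using Real.abs_sin_le_one (ω * σ)
      _ = ε / 3 * ‖q a σ‖ := one_mul _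
      _ ≤ ε / 3 * (2 * ‖a‖) := by
          apply mul_le_mul_of_nonneg_left (hqb σ) hε3.le
  have hIb : ‖∫ σ in (0:ℝ)..T, Real.sin (ω * σ) • ρ (q a σ)‖ ≤ ε / 3 * (2 * ‖a‖) * T := by
    have := intervalIntegral.norm_integral_le_of_norm_le_const hbound
    rwa [sub_zero, abs_of_pos hT] at this
  rw [Real.dist_eq, sub_zero, abs_of_nonneg (by positivity)]
  rw [norm_smul, Real.norm_eq_abs, abs_of_pos (by positivity : (0:ℝ) < 1 / T)]
  rw [div_lt_iff₀ hna]
  calc 1 / T * ‖∫ σ in (0:ℝ)..T, Real.sin (ω * σ) • ρ (q a σ)‖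
      ≤ 1 / T * (ε / 3 * (2 * ‖a‖) * T) := by
        apply mul_le_mul_of_nonneg_left hIb (by positivity)
    _ = 2 * ε / 3 * ‖a‖ := by field_simp
    _ < ε * ‖a‖ := by nlinarith



theorem demodulated_averaged_gradient_first_order_expansion
    (v : ℝ × ℝ → ℝ) (hv : ContDiff ℝ 2 v)
    (hdv0 : fderiv ℝ v 0 = 0)
    (T ω₁ ω₂ : ℝ) (hT : 0 < T) (hω₁ : 0 < ω₁) (hω₂ : 0 < ω₂) (hne : ω₁ ≠ ω₂)
    (n₁ n₂ : ℕ) (hn₁ : 0 < n₁) (hn₂ : 0 < n₂)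
    (hT₁ : ω₁ * T = 2 * Real.pi * n₁) (hT₂ : ω₂ * T = 2 * Real.pi * n₂)
    (U : Set (ℝ × ℝ)) (hU : U ∈ nhds (0 : ℝ × ℝ))
    (r : ℝ × ℝ → ℝ × ℝ) (hr : ContDiffOn ℝ 1 r U) (hr0 : r 0 = 0)
    (hdr0 : fderiv ℝ r 0 = 0)
    -- the gradient of `v`, as an `ℝ²`-valued map
    (gradv : ℝ × ℝ → ℝ × ℝ)
    (hgradv : ∀ x, gradv x = (fderiv ℝ v x (1, 0), fderiv ℝ v x (0, 1)))
    -- the columns `H·e₁` and `H·e₂` of the Hessian `H = ∇²v(0)`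
    (He₁ He₂ : ℝ × ℝ)
    (hHe₁ : He₁ = (fderiv ℝ (fderiv ℝ v) 0 (1, 0) (1, 0),
                   fderiv ℝ (fderiv ℝ v) 0 (0, 1) (1, 0)))
    (hHe₂ : He₂ = (fderiv ℝ (fderiv ℝ v) 0 (1, 0) (0, 1),
                   fderiv ℝ (fderiv ℝ v) 0 (0, 1) (0, 1))) :
    Tendsto
      (fun a : ℝ × ℝ =>
        ‖(1 / T) • (∫ σ in (0 : ℝ)..T,
            Real.sin (ω₁ * σ) •
              gradv (r a + (a.1 * Real.sin (ω₁ * σ), a.2 * Real.sin (ω₂ * σ))))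
          - (a.1 / 2) • He₁‖ / ‖a‖)
      (𝓝[≠] (0 : ℝ × ℝ)) (𝓝 0)
    ∧
    Tendsto
      (fun a : ℝ × ℝ =>
        ‖(1 / T) • (∫ σ in (0 : ℝ)..T,
            Real.sin (ω₂ * σ) •
              gradv (r a + (a.1 * Real.sin (ω₁ * σ), a.2 * Real.sin (ω₂ * σ))))
          - (a.2 / 2) • He₂‖ / ‖a‖)
      (𝓝[≠] (0 : ℝ × ℝ)) (𝓝 0) := by
  -- basic differentiability facts
  have h12 : (1 : WithTop ℕ∞) + 1 ≤ 2 := by norm_num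
  have hfc1 : ContDiff ℝ 1 (fderiv ℝ v) := hv.fderiv_right h12
  set B := fderiv ℝ (fderiv ℝ v) 0 with hB'
  have hB : HasFDerivAt (fderiv ℝ v) B 0 :=
    ((hfc1.differentiable one_ne_zero) 0).hasFDerivAt
  have hfd : ∀ y, HasFDerivAt v (fderiv ℝ v y) y :=
    fun y => ((hv.differentiable (by norm_num)) y).hasFDerivAt
  have hsymm : ∀ x y : ℝ × ℝ, B x y = B y x :=
    fun x y => second_derivative_symmetric hfd hB x y
  -- the derivative of gradv at 0
  set E1 : ((ℝ × ℝ) →L[ℝ] ℝ) →L[ℝ] ℝ := ContinuousLinearMap.apply ℝ ℝ ((1, 0) : ℝ × ℝ) with hE1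
  set E2 : ((ℝ × ℝ) →L[ℝ] ℝ) →L[ℝ] ℝ := ContinuousLinearMap.apply ℝ ℝ ((0, 1) : ℝ × ℝ) with hE2
  set A : (ℝ × ℝ) →L[ℝ] (ℝ × ℝ) := (E1.comp B).prod (E2.comp B) with hA'
  have hGfun : gradv = fun x => ((fderiv ℝ v x) (1, 0), (fderiv ℝ v x) (0, 1)) :=
    funext hgradv
  have hGA : HasFDerivAt gradv A 0 := by
    rw [hGfun]
    exact ((E1.hasFDerivAt.comp 0 hB).prodMk (E2.hasFDerivAt.comp 0 hB))
  have hGc : Continuous gradv := by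
    rw [hGfun]
    exact (E1.continuous.comp hfc1.continuous).prodMk (E2.continuous.comp hfc1.continuous)
  have hG0 : gradv 0 = 0 := by
    rw [hgradv 0, hdv0]; simp
  have hAe1 : A ((1, 0) : ℝ × ℝ) = He₁ := by
    rw [hHe₁]
    have : A ((1, 0) : ℝ × ℝ) = (B (1, 0) (1, 0), B (1, 0) (0, 1)) := by
      simp [hA', hE1, hE2]
    rw [this]
    exact Prod.ext rfl (hsymm (1, 0) (0, 1))
  have hAe2 : A ((0, 1) : ℝ × ℝ) = He₂ := by
    rw [hHe₂]
    have : A ((0, 1) : ℝ × ℝ) = (B (0, 1) (1, 0), B (0, 1) (0, 1)) := by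
      simp [hA', hE1, hE2]
    rw [this]
    exact Prod.ext (hsymm (0, 1) (1, 0)) rfl
  -- r is little-o
  have hrO : (fun a => r a) =o[𝓝 (0 : ℝ × ℝ)] (fun a => a) := by
    have hdiff : DifferentiableAt ℝ r 0 := (hr.contDiffAt hU).differentiableAt one_ne_zero
    have h := hdiff.hasFDerivAt.isLittleO
    simpa [hr0, hdr0] using h
  -- trig integrals
  have hs1 : ∫ σ in (0:ℝ)..T, Real.sin (ω₁ * σ) = 0 :=
    myint_sin ω₁ T hω₁.ne' n₁ (by rw [hT₁]; push_cast; ring)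
  have hs2 : ∫ σ in (0:ℝ)..T, Real.sin (ω₂ * σ) = 0 :=
    myint_sin ω₂ T hω₂.ne' n₂ (by rw [hT₂]; push_cast; ring)
  have h11 : ∫ σ in (0:ℝ)..T, Real.sin (ω₁ * σ) * Real.sin (ω₁ * σ) = T / 2 :=
    myint_sinsq ω₁ T hω₁.ne' n₁ (by rw [hT₁]; push_cast; ring)
  have h22 : ∫ σ in (0:ℝ)..T, Real.sin (ω₂ * σ) * Real.sin (ω₂ * σ) = T / 2 :=
    myint_sinsq ω₂ T hω₂.ne' n₂ (by rw [hT₂]; push_cast; ring)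
  have h12' : ∫ σ in (0:ℝ)..T, Real.sin (ω₁ * σ) * Real.sin (ω₂ * σ) = 0 :=
    myint_sinsin ω₁ ω₂ T hne hω₁ hω₂ n₁ n₂
      (by rw [hT₁]; push_cast; ring) (by rw [hT₂]; push_cast; ring)
  have h21' : ∫ σ in (0:ℝ)..T, Real.sin (ω₂ * σ) * Real.sin (ω₁ * σ) = 0 :=
    myint_sinsin ω₂ ω₁ T (Ne.symm hne) hω₂ hω₁ n₂ n₁
      (by rw [hT₂]; push_cast; ring) (by rw [hT₁]; push_cast; ring)
  constructor
  · -- first component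
    apply aux_tendsto gradv hGc A hGA hG0 r hrO T ω₁ ω₁ ω₂ hT
      (fun a => ((a.1, 0) : ℝ × ℝ)) (fun a => (a.1 / 2) • He₁)
    · intro a
      rw [Prod.norm_def]
      exact max_le (norm_fst_le a) (by simpa using norm_nonneg a)
    · intro a
      have : ((a.1, 0) : ℝ × ℝ) = a.1 • ((1, 0) : ℝ × ℝ) := by
        simp [Prod.smul_mk]
      rw [this, A.map_smul, hAe1, smul_smul]
      congr 1
      ring
    · intro a
      rw [Kcalc T ω₁ ω₁ ω₂ (T / 2) 0 (r a) a hs1 h11 h12']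
      apply Prod.ext <;> simp [Prod.smul_mk, smul_eq_mul] <;> ring
  · -- second component
    apply aux_tendsto gradv hGc A hGA hG0 r hrO T ω₂ ω₁ ω₂ hT
      (fun a => ((0, a.2) : ℝ × ℝ)) (fun a => (a.2 / 2) • He₂)
    · intro a
      rw [Prod.norm_def]
      exact max_le (by simpa using norm_nonneg a) (norm_snd_le a)
    · intro a
      have : ((0, a.2) : ℝ × ℝ) = a.2 • ((0, 1) : ℝ × ℝ) := by
        simp [Prod.smul_mk]
      rw [this, A.map_smul, hAe2, smul_smul]
      congr 1
      ring
    · intro a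
      rw [Kcalc T ω₂ ω₁ ω₂ 0 (T / 2) (r a) a hs2 h21' h22]
      apply Prod.ext <;> simp [Prod.smul_mk, smul_eq_mul] <;> ring
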